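/- For each pair 1 ≤ i < j ≤ M define q_{ij}(x) = f_i(x)/(f_i(x)+f_j(x)) when f_i(x)+f_j(x) > 0 and q_{ij}(x) = 1/2 otherwise, and let S(x) = (q_{ij}(x))_{1 ≤ i < j ≤ M} ∈ [0,1]^{M(M−1)/2} be the vector of all pairwise model probabilities (one-to-one transformations of the pairwise Bayes factors). Then there exists a measurable function g : [0,1]^{M(M−1)/2} → ℝ^{M−1} such that g(S(x)) = T(x) for every x with Σ_{j=1}^M f_j(x) > 0; consequently S is Bayes sufficient for the model indicator. -/

import Mathlib

open MeasureTheory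

variable {X : Type*} [MeasurableSpace X]

/-- Posterior probability of model `i` given data `x`, under prior `p`:
`Pr_p(M_i | x) = p i * f i x / ∑ j, p j * f j x`. -/
noncomputable def post (M : ℕ) (f : Fin M → X → ℝ) (p : Fin M → ℝ) (i : Fin M) (x : X) : ℝ :=
  p i * f i x / ∑ j, p j * f j x

/-- Marginal data distribution `μ_p = ∑ i, p i • μ_i` under prior `p`, where `μ_i` has
density `f i` with respect to `ν`. -/
noncomputable def marg (ν : Measure X) (M : ℕ) (f : Fin M → X → ℝ) (p : Fin M → ℝ) :
    Measure X :=
  ∑ i, ENNReal.ofReal (p i) • ν.withDensity (fun x => ENNReal.ofReal (f i x))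

/-- The statistic `T(x) = (T_1(x), …, T_{M-1}(x))` with `T_i(x) = f i x / ∑ j, f j x`,
the posterior model probabilities under the uniform prior (first `M - 1` coordinates). -/
noncomputable def Tstat (M : ℕ) (f : Fin M → X → ℝ) (x : X) (i : Fin (M - 1)) : ℝ :=
  f (Fin.castLE (Nat.sub_le M 1) i) x / ∑ j, f j x

/-- `p` is a prior over the `M` models. -/
def IsPrior (M : ℕ) (p : Fin M → ℝ) : Prop :=
  (∀ i, 0 ≤ p i) ∧ ∑ i, p i = 1

/-- `S` is Bayes sufficient for the model indicator: for every prior `p` and every model `i`,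
the conditional expectation of `Pr_p(M_i | ·)` given `σ(S)` under `μ_p` equals
`Pr_p(M_i | ·)` `μ_p`-almost everywhere. -/
noncomputable def BayesSufficient (ν : Measure X) (M : ℕ) (f : Fin M → X → ℝ)
    {Y : Type*} [MeasurableSpace Y] (S : X → Y) : Prop :=
  ∀ p : Fin M → ℝ, IsPrior M p → ∀ i : Fin M,
    (marg ν M f p)[post M f p i|MeasurableSpace.comap S inferInstance]
      =ᵐ[marg ν M f p] post M f p i

/-- For each pair `i < j`, the pairwise posterior probability of model `i` versus model `j`
(a one-to-one transformation of the pairwise Bayes factor), with convention `1/2` when both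
densities vanish. -/
noncomputable def pairStat (M : ℕ) (f : Fin M → X → ℝ) (x : X)
    (ij : {q : Fin M × Fin M // q.1 < q.2}) : ℝ :=
  if 0 < f ij.1.1 x + f ij.1.2 x then f ij.1.1 x / (f ij.1.1 x + f ij.1.2 x) else 1 / 2

namespace PairSuffAux

abbrev Pr (M : ℕ) := {q : Fin M × Fin M // q.1 < q.2}

noncomputable def cmpv (M : ℕ) (q : Pr M → ℝ) (k j : Fin M) : ℝ :=
  if h : k < j then q ⟨(k, j), h⟩ else if h' : j < k then 1 - q ⟨(j, k), h'⟩ else 1/2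

noncomputable def rat (M : ℕ) (q : Pr M → ℝ) (k j : Fin M) : ℝ :=
  if h : k < j then (1 - q ⟨(k, j), h⟩) / q ⟨(k, j), h⟩
  else if h' : j < k then q ⟨(j, k), h'⟩ / (1 - q ⟨(j, k), h'⟩) else 1

def Good (M : ℕ) (q : Pr M → ℝ) (k : Fin M) : Prop :=
  (∀ j, 1/2 ≤ cmpv M q k j) ∧ ∀ k', k' < k → ¬ (∀ j, 1/2 ≤ cmpv M q k' j)

open Classical in
noncomputable def gFull (M : ℕ) (q : Pr M → ℝ) (j : Fin M) : ℝ :=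
  ∑ k, if Good M q k then rat M q k j / ∑ j', rat M q k j' else 0

lemma cmpv_meas (M : ℕ) (k j : Fin M) : Measurable fun q : Pr M → ℝ => cmpv M q k j := by
  unfold cmpv
  split_ifs <;> measurability

lemma rat_meas (M : ℕ) (k j : Fin M) : Measurable fun q : Pr M → ℝ => rat M q k j := by
  unfold rat
  split_ifs <;> measurability

lemma good_meas (M : ℕ) (k : Fin M) : MeasurableSet {q : Pr M → ℝ | Good M q k} := by
  have h1 : ∀ k' : Fin M, MeasurableSet {q : Pr M → ℝ | ∀ j, 1/2 ≤ cmpv M q k' j} := by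
    intro k'
    have : {q : Pr M → ℝ | ∀ j, 1/2 ≤ cmpv M q k' j}
        = ⋂ j, {q : Pr M → ℝ | 1/2 ≤ cmpv M q k' j} := by
      ext q; simp [Set.mem_iInter]
    rw [this]
    exact MeasurableSet.iInter fun j => measurableSet_le measurable_const (cmpv_meas M k' j)
  have : {q : Pr M → ℝ | Good M q k}
      = {q : Pr M → ℝ | ∀ j, 1/2 ≤ cmpv M q k j}
        ∩ ⋂ (k' : Fin M), ⋂ (_ : k' < k), {q : Pr M → ℝ | ∀ j, 1/2 ≤ cmpv M q k' j}ᶜ := by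
    ext q
    simp only [Good, Set.mem_inter_iff, Set.mem_setOf_eq, Set.mem_iInter, Set.mem_compl_iff]
  rw [this]
  exact (h1 k).inter (MeasurableSet.iInter fun k' => MeasurableSet.iInter fun _ => (h1 k').compl)

lemma gFull_meas (M : ℕ) : Measurable (gFull M) := by
  apply measurable_pi_lambda
  intro j
  apply Finset.measurable_sum
  intro k _
  exact Measurable.ite (good_meas M k)
    ((rat_meas M k j).div (Finset.measurable_sum _ fun j' _ => rat_meas M k j'))
    measurable_const

lemma cmpv_pair (M : ℕ) (f : Fin M → X → ℝ) (hnn : ∀ i x, 0 ≤ f i x) (x : X) (k j : Fin M) :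
    1/2 ≤ cmpv M (pairStat M f x) k j ↔ f j x ≤ f k x := by
  rcases lt_trichotomy k j with h | h | h
  · rw [cmpv, dif_pos h]
    show 1/2 ≤ (if 0 < f k x + f j x then f k x / (f k x + f j x) else 1/2) ↔ f j x ≤ f k x
    by_cases hs : 0 < f k x + f j x
    · rw [if_pos hs, le_div_iff₀ hs]
      constructor <;> intro <;> linarith
    · rw [if_neg hs]
      push_neg at hs
      have h1 := hnn k x; have h2 := hnn j x
      constructor <;> intro <;> linarith
  · subst h
    rw [cmpv, dif_neg (lt_irrefl k), dif_neg (lt_irrefl k)]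
    simp
  · rw [cmpv, dif_neg (not_lt.mpr h.le), dif_pos h]
    show 1/2 ≤ 1 - (if 0 < f j x + f k x then f j x / (f j x + f k x) else 1/2) ↔ f j x ≤ f k x
    by_cases hs : 0 < f j x + f k x
    · rw [if_pos hs]
      have hd : f j x / (f j x + f k x) ≤ 1/2 ↔ f j x ≤ f k x := by
        rw [div_le_iff₀ hs]
        constructor <;> intro <;> linarith
      rw [← hd]
      constructor <;> intro <;> linarith
    · rw [if_neg hs]
      push_neg at hs
      have h1 := hnn k x; have h2 := hnn j x
      have hj : f j x = 0 := le_antisymm (by linarith) h2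
      have hk' : f k x = 0 := le_antisymm (by linarith) h1
      rw [hj, hk']
      norm_num

lemma rat_pair (M : ℕ) (f : Fin M → X → ℝ) (hnn : ∀ i x, 0 ≤ f i x) (x : X) (k j : Fin M)
    (hk : 0 < f k x) : rat M (pairStat M f x) k j = f j x / f k x := by
  rcases lt_trichotomy k j with h | h | h
  · have hs : 0 < f k x + f j x := by have := hnn j x; linarith
    rw [rat, dif_pos h]
    show (1 - (if 0 < f k x + f j x then f k x / (f k x + f j x) else 1/2))
        / (if 0 < f k x + f j x then f k x / (f k x + f j x) else 1/2) = f j x / f k x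
    rw [if_pos hs]
    field_simp
    ring
  · subst h
    rw [rat, dif_neg (lt_irrefl k), dif_neg (lt_irrefl k), div_self hk.ne']
  · have hs : 0 < f j x + f k x := by have := hnn j x; linarith
    rw [rat, dif_neg (not_lt.mpr h.le), dif_pos h]
    show (if 0 < f j x + f k x then f j x / (f j x + f k x) else 1/2)
        / (1 - (if 0 < f j x + f k x then f j x / (f j x + f k x) else 1/2)) = f j x / f k x
    rw [if_pos hs]
    have h1 : 1 - f j x / (f j x + f k x) = f k x / (f j x + f k x) := by
      field_simp
      ring
    rw [h1, div_div_div_cancel_right₀]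
    exact hs.ne' 

lemma gFull_pair (M : ℕ) (hM : 2 ≤ M) (f : Fin M → X → ℝ) (hnn : ∀ i x, 0 ≤ f i x) (x : X)
    (hx : 0 < ∑ j, f j x) (j : Fin M) :
    gFull M (pairStat M f x) j = f j x / ∑ j', f j' x := by
  classical
  haveI : Nonempty (Fin M) := ⟨⟨0, by omega⟩⟩
  set q := pairStat M f x with hq
  set A : Finset (Fin M) := Finset.univ.filter (fun k => ∀ j', f j' x ≤ f k x) with hA
  obtain ⟨k0, hk0⟩ := Finite.exists_max (fun k => f k x)
  have hAne : A.Nonempty := ⟨k0, by simp only [hA, Finset.mem_filter, Finset.mem_univ, true_and]; exact hk0⟩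
  set k1 := A.min' hAne with hk1
  have hk1mem : k1 ∈ A := A.min'_mem hAne
  have hk1max : ∀ j', f j' x ≤ f k1 x := by
    simpa only [hA, Finset.mem_filter, Finset.mem_univ, true_and] using hk1mem
  have hk1pos : 0 < f k1 x := by
    by_contra h
    push_neg at h
    have : ∑ j', f j' x ≤ 0 :=
      Finset.sum_nonpos fun j' _ => le_trans (hk1max j') h
    linarith
  have hmem_iff : ∀ k', (∀ j', 1/2 ≤ cmpv M q k' j') ↔ k' ∈ A := by
    intro k'
    simp only [hA, Finset.mem_filter, Finset.mem_univ, true_and]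
    exact forall_congr' fun j' => cmpv_pair M f hnn x k' j'
  have hGood_iff : ∀ k, Good M q k ↔ k = k1 := by
    intro k
    constructor
    · rintro ⟨h1, h2⟩
      have hkA : k ∈ A := (hmem_iff k).1 h1
      rcases eq_or_lt_of_le (A.min'_le k hkA) with h | h
      · exact h.symm
      · exact absurd ((hmem_iff k1).2 hk1mem) (h2 k1 h)
    · rintro rfl
      refine ⟨(hmem_iff k1).2 hk1mem, fun k' hk' hall => ?_⟩
      exact absurd (A.min'_le k' ((hmem_iff k').1 hall)) (not_le.mpr hk')
  have hsum : gFull M q j = rat M q k1 j / ∑ j', rat M q k1 j' := by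
    rw [gFull, Finset.sum_eq_single_of_mem k1 (Finset.mem_univ _)]
    · rw [if_pos ((hGood_iff k1).2 rfl)]
    · intro b _ hb
      rw [if_neg]
      intro hg
      exact hb ((hGood_iff b).1 hg)
  have hrat : ∀ j', rat M q k1 j' = f j' x / f k1 x :=
    fun j' => rat_pair M f hnn x k1 j' hk1pos
  rw [hsum]
  simp only [hrat]
  rw [← Finset.sum_div, div_div_div_cancel_right₀]
  exact hk1pos.ne' 

end PairSuffAux

open PairSuffAux in
/-- The vector `S(x) = (q_{ij}(x))_{i<j}` of all pairwise model probabilities determines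
`T(x)` (wherever `∑ j, f j x > 0`) via a measurable map `g`, and consequently `S` is Bayes
sufficient for the model indicator. -/
theorem pairStat_bayesSufficient
    (ν : Measure X) [SigmaFinite ν] (M : ℕ) (hM : 2 ≤ M)
    (f : Fin M → X → ℝ) (hf_meas : ∀ i, Measurable (f i))
    (hf_nonneg : ∀ i x, 0 ≤ f i x) (hf_one : ∀ i, ∫ x, f i x ∂ν = 1)
    (hf_pos : ∀ᵐ x ∂ν, 0 < ∑ j, f j x) :
    (∃ g : ({q : Fin M × Fin M // q.1 < q.2} → ℝ) → Fin (M - 1) → ℝ,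
        Measurable g ∧ ∀ x : X, 0 < ∑ j, f j x → g (pairStat M f x) = Tstat M f x) ∧
      BayesSufficient ν M f (pairStat M f) := by
  constructor
  · refine ⟨fun q i => gFull M q (Fin.castLE (Nat.sub_le M 1) i), ?_, ?_⟩
    · exact measurable_pi_lambda _ fun i => (measurable_pi_apply _).comp (gFull_meas M)
    · intro x hx
      funext i
      show gFull M (pairStat M f x) (Fin.castLE (Nat.sub_le M 1) i) = Tstat M f x i
      rw [gFull_pair M hM f hf_nonneg x hx, Tstat]
  · intro p hp i
    set μp := marg ν M f p with hμp
    -- f i integrable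
    have hf_int : ∀ i, Integrable (f i) ν := by
      intro i
      by_contra h
      have := hf_one i
      rw [integral_undef h] at this
      norm_num at this
    -- finite measure
    haveI : IsFiniteMeasure μp := by
      constructor
      rw [hμp, marg, Measure.finset_sum_apply]
      refine ENNReal.sum_lt_top.mpr fun k _ => ?_
      rw [Measure.smul_apply, smul_eq_mul]
      refine ENNReal.mul_lt_top ENNReal.ofReal_lt_top ?_
      rw [withDensity_apply _ MeasurableSet.univ, Measure.restrict_univ,
        ← ofReal_integral_eq_lintegral_ofReal (hf_int k) (Filter.Eventually.of_forall fun y => hf_nonneg k y)]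
      exact ENNReal.ofReal_lt_top
    -- absolute continuity
    have hac : μp ≪ ν := by
      refine Measure.AbsolutelyContinuous.mk fun s hs hνs => ?_
      rw [hμp, marg, Measure.finset_sum_apply]
      refine Finset.sum_eq_zero fun k _ => ?_
      rw [Measure.smul_apply, withDensity_absolutelyContinuous ν _ hνs, smul_zero]
    have hae : ∀ᵐ x ∂μp, 0 < ∑ j, f j x := hf_pos.filter_mono hac.ae_le
    -- pairStat measurable
    have hSmeas : Measurable (pairStat M f) := by
      apply measurable_pi_lambda
      intro ij
      exact Measurable.ite
        (measurableSet_lt measurable_const ((hf_meas _).add (hf_meas _)))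
        ((hf_meas _).div ((hf_meas _).add (hf_meas _)))
        measurable_const
    have hm : MeasurableSpace.comap (pairStat M f) inferInstance ≤ ‹MeasurableSpace X› :=
      hSmeas.comap_le
    -- the function h
    set hfun : (Pr M → ℝ) → ℝ :=
      fun q => p i * gFull M q i / ∑ j, p j * gFull M q j with hhfun
    have hfun_meas : Measurable hfun := by
      apply Measurable.div
      · exact measurable_const.mul ((measurable_pi_apply i).comp (gFull_meas M))
      · exact Finset.measurable_sum _ fun j _ =>
          measurable_const.mul ((measurable_pi_apply j).comp (gFull_meas M))
    have hkey : ∀ x, 0 < ∑ j, f j x → hfun (pairStat M f x) = post M f p i x := by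
      intro x hx
      have hg : ∀ j, gFull M (pairStat M f x) j = f j x / ∑ j', f j' x :=
        fun j => gFull_pair M hM f hf_nonneg x hx j
      have hs : (∑ j', f j' x) ≠ 0 := hx.ne'
      simp only [hhfun, hg, post]
      rw [show (∑ j, p j * (f j x / ∑ j', f j' x)) = (∑ j, p j * f j x) / ∑ j', f j' x by
        rw [Finset.sum_div]; exact Finset.sum_congr rfl fun j _ => by ring]
      rw [← mul_div_assoc]
      by_cases hb : (∑ j, p j * f j x) = 0
      · have hz : p i * f i x = 0 :=
          (Finset.sum_eq_zero_iff_of_nonneg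
            (fun j _ => mul_nonneg (hp.1 j) (hf_nonneg j x))).1 hb i (Finset.mem_univ i)
        rw [hb, hz]
        simp
      · rw [div_div_div_cancel_right₀]
        exact hs
    have h1 : (fun x => hfun (pairStat M f x)) =ᵐ[μp] post M f p i :=
      hae.mono fun x hx => hkey x hx
    -- post is bounded and measurable
    have hpost_meas : Measurable (post M f p i) :=
      (measurable_const.mul (hf_meas i)).div
        (Finset.measurable_sum _ fun j _ => measurable_const.mul (hf_meas j))
    have hpost_bd : ∀ x, ‖post M f p i x‖ ≤ 1 := by
      intro x
      have ha : 0 ≤ p i * f i x := mul_nonneg (hp.1 i) (hf_nonneg i x)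
      have hball : ∀ j : Fin M, 0 ≤ p j * f j x :=
        fun j => mul_nonneg (hp.1 j) (hf_nonneg j x)
      have hb : 0 ≤ ∑ j, p j * f j x := Finset.sum_nonneg fun j _ => hball j
      have hab : p i * f i x ≤ ∑ j, p j * f j x :=
        Finset.single_le_sum (fun j _ => hball j) (Finset.mem_univ i)
      rw [post, Real.norm_eq_abs, abs_of_nonneg (div_nonneg ha hb)]
      exact div_le_one_of_le₀ hab hb
    have hpost_int : Integrable (post M f p i) μp :=
      Integrable.mono' (integrable_const 1) hpost_meas.aestronglyMeasurable
        (Filter.Eventually.of_forall hpost_bd)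
    have hcomp_int : Integrable (fun x => hfun (pairStat M f x)) μp :=
      hpost_int.congr h1.symm
    have hsm : StronglyMeasurable[MeasurableSpace.comap (pairStat M f) inferInstance]
        (fun x => hfun (pairStat M f x)) := by
      apply Measurable.stronglyMeasurable
      intro t ht
      exact ⟨hfun ⁻¹' t, hfun_meas ht, rfl⟩
    have h2 : μp[fun x => hfun (pairStat M f x)|MeasurableSpace.comap (pairStat M f) inferInstance]
        = fun x => hfun (pairStat M f x) :=
      condExp_of_stronglyMeasurable hm hsm hcomp_int
    refine (condExp_congr_ae h1.symm).trans ?_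
    rw [h2]
    exact h1
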